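/- In the four-node ADT deterministic two-way function-multicast network with m ≠ n, the forward sources S₁^K and S₂^K are conditionally independent given (Y₁^N, Y₂^N, S̃₁^K̃, S̃₂^K̃); equivalently, the conditional mutual information I(S₁^K; S₂^K | Y₁^N, Y₂^N, S̃₁^K̃, S̃₂^K̃) = 0 (the Markov chain S₁^K − (Y₁^N, Y₂^N, S̃₁^K̃, S̃₂^K̃) − S₂^K holds). -/

import Mathlib

open Matrix Filter

namespace TwoWay

/-- The `q × q` shift matrix over `𝔽₂`: entry `(i,j)` is `1` iff `i = j + 1`. -/
def shiftG (q : ℕ) : Matrix (Fin q) (Fin q) (ZMod 2) :=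
  Matrix.of fun i j => if (i : ℕ) = (j : ℕ) + 1 then 1 else 0

/-- Outputs of a symmetric ADT deterministic channel pair with direct-link level `n`
and cross-link level `m`: given inputs `x₁, x₂ ∈ 𝔽₂^{max m n}` it returns
`(Y₁, Y₂) = (G^{q-n} x₁ + G^{q-m} x₂, G^{q-m} x₁ + G^{q-n} x₂)` where `q = max m n`. -/
def chOut (m n : ℕ) (x1 x2 : Fin (max m n) → ZMod 2) :
    (Fin (max m n) → ZMod 2) × (Fin (max m n) → ZMod 2) :=
  (shiftG (max m n) ^ (max m n - n) *ᵥ x1 + shiftG (max m n) ^ (max m n - m) *ᵥ x2,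
   shiftG (max m n) ^ (max m n - m) *ᵥ x1 + shiftG (max m n) ^ (max m n - n) *ᵥ x2)

/-- A code of block length `N` for the four-node ADT deterministic two-way
function-multicast network with forward parameters `(m, n)` and backward
parameters `(mt, nt)`.  Nodes `1, 2` carry forward sources of length `K`
(encoders `f1, f2`, taking the node's own source and its past received backward
signals); nodes `1̃, 2̃` carry backward sources of length `Kt` (encoders
`ft1, ft2`).  `dect1, dect2` are the decoders at nodes `1̃, 2̃` for the forward
modulo-2 sum, and `dec1, dec2` the decoders at nodes `1, 2` for the backward
modulo-2 sum. -/
structure Code (m n mt nt : ℕ) where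
  N : ℕ
  Npos : 0 < N
  K : ℕ
  Kt : ℕ
  f1 : (i : ℕ) → (Fin K → ZMod 2) → (Fin i → (Fin (max mt nt) → ZMod 2)) →
    (Fin (max m n) → ZMod 2)
  f2 : (i : ℕ) → (Fin K → ZMod 2) → (Fin i → (Fin (max mt nt) → ZMod 2)) →
    (Fin (max m n) → ZMod 2)
  ft1 : (i : ℕ) → (Fin Kt → ZMod 2) → (Fin i → (Fin (max m n) → ZMod 2)) →
    (Fin (max mt nt) → ZMod 2)
  ft2 : (i : ℕ) → (Fin Kt → ZMod 2) → (Fin i → (Fin (max m n) → ZMod 2)) →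
    (Fin (max mt nt) → ZMod 2)
  dec1 : (Fin N → (Fin (max mt nt) → ZMod 2)) → (Fin Kt → ZMod 2)
  dec2 : (Fin N → (Fin (max mt nt) → ZMod 2)) → (Fin Kt → ZMod 2)
  dect1 : (Fin N → (Fin (max m n) → ZMod 2)) → (Fin K → ZMod 2)
  dect2 : (Fin N → (Fin (max m n) → ZMod 2)) → (Fin K → ZMod 2)

variable {m n mt nt : ℕ}

/-- The tuple of transmitted signals `(X₁ᵢ, X₂ᵢ, X̃₁ᵢ, X̃₂ᵢ)` at one time instant. -/
abbrev Sig (m n mt nt : ℕ) : Type :=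
  (Fin (max m n) → ZMod 2) × (Fin (max m n) → ZMod 2) ×
  (Fin (max mt nt) → ZMod 2) × (Fin (max mt nt) → ZMod 2)

/-- One time step: the four encoders applied to the sources and the past received
signals determined by the history `h` of transmitted signals.  Node `k`'s encoder
sees `Ỹ_k^{i-1}` and node `k̃`'s encoder sees `Y_k^{i-1}`. -/
def step (C : Code m n mt nt) (s1 s2 : Fin C.K → ZMod 2) (t1 t2 : Fin C.Kt → ZMod 2)
    (i : ℕ) (h : Fin i → Sig m n mt nt) : Sig m n mt nt :=
  (C.f1 i s1 (fun j => (chOut mt nt (h j).2.2.1 (h j).2.2.2).1),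
   C.f2 i s2 (fun j => (chOut mt nt (h j).2.2.1 (h j).2.2.2).2),
   C.ft1 i t1 (fun j => (chOut m n (h j).1 (h j).2.1).1),
   C.ft2 i t2 (fun j => (chOut m n (h j).1 (h j).2.1).2))

/-- The history of transmitted signals up to (exclusive) time `i`, determined by
the sources. -/
def hist (C : Code m n mt nt) (s1 s2 : Fin C.K → ZMod 2) (t1 t2 : Fin C.Kt → ZMod 2) :
    (i : ℕ) → Fin i → Sig m n mt nt
  | 0 => Fin.elim0
  | i + 1 => Fin.snoc (hist C s1 s2 t1 t2 i) (step C s1 s2 t1 t2 i (hist C s1 s2 t1 t2 i))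

/-- Node `1̃`'s received sequence `Y₁^N`. -/
def recvF1 (C : Code m n mt nt) (s1 s2 : Fin C.K → ZMod 2) (t1 t2 : Fin C.Kt → ZMod 2) :
    Fin C.N → Fin (max m n) → ZMod 2 :=
  fun i => (chOut m n (hist C s1 s2 t1 t2 C.N i).1 (hist C s1 s2 t1 t2 C.N i).2.1).1

/-- Node `2̃`'s received sequence `Y₂^N`. -/
def recvF2 (C : Code m n mt nt) (s1 s2 : Fin C.K → ZMod 2) (t1 t2 : Fin C.Kt → ZMod 2) :
    Fin C.N → Fin (max m n) → ZMod 2 :=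
  fun i => (chOut m n (hist C s1 s2 t1 t2 C.N i).1 (hist C s1 s2 t1 t2 C.N i).2.1).2

/-- Node `1`'s received sequence `Ỹ₁^N`. -/
def recvB1 (C : Code m n mt nt) (s1 s2 : Fin C.K → ZMod 2) (t1 t2 : Fin C.Kt → ZMod 2) :
    Fin C.N → Fin (max mt nt) → ZMod 2 :=
  fun i => (chOut mt nt (hist C s1 s2 t1 t2 C.N i).2.2.1 (hist C s1 s2 t1 t2 C.N i).2.2.2).1

/-- Node `2`'s received sequence `Ỹ₂^N`. -/
def recvB2 (C : Code m n mt nt) (s1 s2 : Fin C.K → ZMod 2) (t1 t2 : Fin C.Kt → ZMod 2) :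
    Fin C.N → Fin (max mt nt) → ZMod 2 :=
  fun i => (chOut mt nt (hist C s1 s2 t1 t2 C.N i).2.2.1 (hist C s1 s2 t1 t2 C.N i).2.2.2).2

/-- The space of source realizations `(S₁^K, S₂^K, S̃₁^K̃, S̃₂^K̃)`;
the sources are i.i.d. Bernoulli(1/2), i.e. uniform on this finite space. -/
abbrev SrcSpace (C : Code m n mt nt) : Type :=
  (Fin C.K → ZMod 2) × (Fin C.K → ZMod 2) × (Fin C.Kt → ZMod 2) × (Fin C.Kt → ZMod 2)

-- Probability of an event under the uniform (i.i.d. Bernoulli(1/2)) source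
-- distribution.
open Classical in
noncomputable def probOf (C : Code m n mt nt) (E : SrcSpace C → Prop) : ℝ :=
  ((Finset.univ.filter E).card : ℝ) / (Fintype.card (SrcSpace C) : ℝ)

/-- Decoding error probability at node `1̃` (forward modulo-2 sum). -/
noncomputable def errF1 (C : Code m n mt nt) : ℝ :=
  probOf C fun ω =>
    C.dect1 (recvF1 C ω.1 ω.2.1 ω.2.2.1 ω.2.2.2) ≠ fun k => ω.1 k + ω.2.1 k

/-- Decoding error probability at node `2̃` (forward modulo-2 sum). -/
noncomputable def errF2 (C : Code m n mt nt) : ℝ :=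
  probOf C fun ω =>
    C.dect2 (recvF2 C ω.1 ω.2.1 ω.2.2.1 ω.2.2.2) ≠ fun k => ω.1 k + ω.2.1 k

/-- Decoding error probability at node `1` (backward modulo-2 sum). -/
noncomputable def errB1 (C : Code m n mt nt) : ℝ :=
  probOf C fun ω =>
    C.dec1 (recvB1 C ω.1 ω.2.1 ω.2.2.1 ω.2.2.2) ≠ fun k => ω.2.2.1 k + ω.2.2.2 k

/-- Decoding error probability at node `2` (backward modulo-2 sum). -/
noncomputable def errB2 (C : Code m n mt nt) : ℝ :=
  probOf C fun ω =>
    C.dec2 (recvB2 C ω.1 ω.2.1 ω.2.2.1 ω.2.2.2) ≠ fun k => ω.2.2.1 k + ω.2.2.2 k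

/-- A rate pair `(R, R̃) = (K/N, K̃/N)` is achievable if there is a family of codes
whose block lengths tend to infinity and whose four decoding error probabilities
tend to `0`. -/
def Achievable (m n mt nt : ℕ) (R Rt : ℝ) : Prop :=
  ∃ Cs : ℕ → Code m n mt nt,
    Tendsto (fun ν => (Cs ν).N) atTop atTop ∧
    (∀ ν, ((Cs ν).K : ℝ) / ((Cs ν).N : ℝ) = R) ∧
    (∀ ν, ((Cs ν).Kt : ℝ) / ((Cs ν).N : ℝ) = Rt) ∧
    Tendsto (fun ν => errF1 (Cs ν)) atTop (nhds 0) ∧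
    Tendsto (fun ν => errF2 (Cs ν)) atTop (nhds 0) ∧
    Tendsto (fun ν => errB1 (Cs ν)) atTop (nhds 0) ∧
    Tendsto (fun ν => errB2 (Cs ν)) atTop (nhds 0)

/-- The computation capacity region: the closure of the set of achievable rate pairs. -/
def CapacityRegion (m n mt nt : ℕ) : Set (ℝ × ℝ) :=
  closure {p : ℝ × ℝ | Achievable m n mt nt p.1 p.2}

/-- The perfect-feedback computation capacity: `n` if `m = n`, and
`(2/3) max(m,n)` otherwise (i.e. `(2/3)n` if `m < n` and `(2/3)m` if `m > n`). -/
noncomputable def Cpf (m n : ℕ) : ℝ :=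
  if m = n then (n : ℝ) else (2 / 3) * (max m n : ℝ)

end TwoWay

namespace FinInfo

variable {Ω : Type*} [Fintype Ω]

/-- The probability that the random variable `X` takes the value `a`, where the
underlying finite sample space carries the probability mass function `p`. -/
noncomputable def pr (p : Ω → ℝ) {α : Type*} [DecidableEq α] (X : Ω → α) (a : α) : ℝ :=
  ∑ ω, if X ω = a then p ω else 0

/-- The Shannon entropy `H(X)` of a finitely valued random variable `X` on a
finite probability space with mass function `p` (natural logarithm). -/
noncomputable def entropy (p : Ω → ℝ) {α : Type*} [Fintype α] [DecidableEq α]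
    (X : Ω → α) : ℝ :=
  ∑ a : α, Real.negMulLog (pr p X a)

/-- Conditional entropy `H(X | Y) = H(X, Y) - H(Y)`. -/
noncomputable def condEntropy (p : Ω → ℝ) {α β : Type*} [Fintype α] [DecidableEq α]
    [Fintype β] [DecidableEq β] (X : Ω → α) (Y : Ω → β) : ℝ :=
  entropy p (fun ω => (X ω, Y ω)) - entropy p Y

/-- Conditional mutual information
`I(X ; Y | Z) = H(X, Z) + H(Y, Z) - H(X, Y, Z) - H(Z)`. -/
noncomputable def condMutualInfo (p : Ω → ℝ) {α β γ : Type*}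
    [Fintype α] [DecidableEq α] [Fintype β] [DecidableEq β] [Fintype γ] [DecidableEq γ]
    (X : Ω → α) (Y : Ω → β) (Z : Ω → γ) : ℝ :=
  entropy p (fun ω => (X ω, Z ω)) + entropy p (fun ω => (Y ω, Z ω))
    - entropy p (fun ω => (X ω, Y ω, Z ω)) - entropy p Z

end FinInfo


namespace TwoWay

lemma shiftG_pow_ne_zero {q d : ℕ} {i j : Fin q} (h : (shiftG q ^ d) i j ≠ 0) :
    (i : ℕ) = (j : ℕ) + d := by
  induction d generalizing i j with
  | zero =>
    simp only [pow_zero] at h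
    by_contra hij
    exact h (Matrix.one_apply_ne (by simpa [Fin.ext_iff] using hij))
  | succ d ih =>
    rw [pow_succ, Matrix.mul_apply] at h
    obtain ⟨k, -, hk⟩ := Finset.exists_ne_zero_of_sum_ne_zero h
    have h1 : (shiftG q ^ d) i k ≠ 0 := fun h0 => hk (by simp [h0])
    have h2 : (shiftG q) k j ≠ 0 := fun h0 => hk (by simp [h0])
    have hkj : (k : ℕ) = (j : ℕ) + 1 := by
      by_contra hc; exact h2 (by simp [shiftG, hc])
    have := ih h1
    omega

lemma shiftG_pow_nilpotent {q d : ℕ} (hd : q ≤ d) : (shiftG q) ^ d = 0 := by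
  ext i j
  by_contra h
  have := shiftG_pow_ne_zero h
  have := i.isLt
  omega

lemma isUnit_AB {m n : ℕ} (hmn : m ≠ n) :
    IsUnit (shiftG (max m n) ^ (max m n - n) + shiftG (max m n) ^ (max m n - m)) := by
  rcases Nat.lt_or_ge m n with h | h
  · have h1 : max m n - n = 0 := by omega
    have h2 : 1 ≤ max m n - m := by omega
    rw [h1, pow_zero]
    exact IsNilpotent.isUnit_one_add ⟨max m n, by
      rw [← pow_mul]; exact shiftG_pow_nilpotent (Nat.le_mul_of_pos_left _ (by omega))⟩
  · have hlt : n < m := lt_of_le_of_ne h (Ne.symm hmn)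
    have h1 : max m n - m = 0 := by omega
    have h2 : 1 ≤ max m n - n := by omega
    rw [h1, pow_zero]
    exact IsNilpotent.isUnit_add_one ⟨max m n, by
      rw [← pow_mul]; exact shiftG_pow_nilpotent (Nat.le_mul_of_pos_left _ (by omega))⟩

lemma addSelf {q : ℕ} (x : Fin q → ZMod 2) : x + x = 0 := by
  funext i; exact CharTwo.add_self_eq_zero _

lemma eqc {q : ℕ} {x y : Fin q → ZMod 2} (h : x + y = 0) : x = y := by
  rw [← add_zero x, ← addSelf y, ← add_assoc, h, zero_add]

lemma chOut_inj {m n : ℕ} (hmn : m ≠ n) {x1 x2 x1' x2' : Fin (max m n) → ZMod 2}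
    (h : chOut m n x1 x2 = chOut m n x1' x2') : x1 = x1' ∧ x2 = x2' := by
  set A := shiftG (max m n) ^ (max m n - n) with hA
  set B := shiftG (max m n) ^ (max m n - m) with hB
  obtain ⟨u, hu⟩ := isUnit_AB hmn
  have hinv : ∀ v : Fin (max m n) → ZMod 2, (A + B) *ᵥ v = 0 → v = 0 := by
    intro v hv
    have : (↑u⁻¹ : Matrix _ _ (ZMod 2)) *ᵥ ((A + B) *ᵥ v) = v := by
      rw [← hu, Matrix.mulVec_mulVec, Units.inv_mul, Matrix.one_mulVec]
    rw [hv, Matrix.mulVec_zero] at this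
    exact this.symm
  have e1 : A *ᵥ x1 + B *ᵥ x2 = A *ᵥ x1' + B *ᵥ x2' := congrArg Prod.fst h
  have e2 : B *ᵥ x1 + A *ᵥ x2 = B *ᵥ x1' + A *ᵥ x2' := congrArg Prod.snd h
  have h1 : A *ᵥ (x1 + x1') + B *ᵥ (x2 + x2') = 0 := by
    have e : A *ᵥ (x1 + x1') + B *ᵥ (x2 + x2')
        = (A *ᵥ x1 + B *ᵥ x2) + (A *ᵥ x1' + B *ᵥ x2') := by
      simp only [Matrix.mulVec_add]; abel
    rw [e, e1, addSelf]
  have h2 : B *ᵥ (x1 + x1') + A *ᵥ (x2 + x2') = 0 := by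
    have e : B *ᵥ (x1 + x1') + A *ᵥ (x2 + x2')
        = (B *ᵥ x1 + A *ᵥ x2) + (B *ᵥ x1' + A *ᵥ x2') := by
      simp only [Matrix.mulVec_add]; abel
    rw [e, e2, addSelf]
  have h3 : (A + B) *ᵥ ((x1 + x1') + (x2 + x2')) = 0 := by
    have e : (A + B) *ᵥ ((x1 + x1') + (x2 + x2'))
        = (A *ᵥ (x1 + x1') + B *ᵥ (x2 + x2')) + (B *ᵥ (x1 + x1') + A *ᵥ (x2 + x2')) := by
      simp only [Matrix.add_mulVec, Matrix.mulVec_add]; abel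
    rw [e, h1, h2, add_zero]
  have h12 : x1 + x1' = x2 + x2' := eqc (hinv _ h3)
  have h4 : (A + B) *ᵥ (x1 + x1') = 0 := by
    rw [Matrix.add_mulVec]
    nth_rewrite 2 [h12]
    exact h1
  have h5 : x1 + x1' = 0 := hinv _ h4
  refine ⟨eqc h5, eqc (by rw [← h12]; exact h5)⟩

section Fiber
variable {m n mt nt : ℕ} (C : Code m n mt nt)
variable (s1 s2 : Fin C.K → ZMod 2) (t1 t2 : Fin C.Kt → ZMod 2)
variable (y1 y2 : ℕ → Fin (max m n) → ZMod 2)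

/-- Reconstructed backward transmissions from `(t1, y1)`. -/
def xt1 (i : ℕ) : Fin (max mt nt) → ZMod 2 := C.ft1 i t1 (fun j : Fin i => y1 j)
def xt2 (i : ℕ) : Fin (max mt nt) → ZMod 2 := C.ft2 i t2 (fun j : Fin i => y2 j)
/-- Reconstructed backward received signals. -/
def yt1 (j : ℕ) : Fin (max mt nt) → ZMod 2 :=
  (chOut mt nt (xt1 C t1 y1 j) (xt2 C t2 y2 j)).1
def yt2 (j : ℕ) : Fin (max mt nt) → ZMod 2 :=
  (chOut mt nt (xt1 C t1 y1 j) (xt2 C t2 y2 j)).2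
/-- Reconstructed forward transmission of node 1 from `(s1, t1, t2, y)`. -/
def xhat1 (i : ℕ) : Fin (max m n) → ZMod 2 :=
  C.f1 i s1 (fun j : Fin i => yt1 C t1 t2 y1 y2 j)
def xhat2 (i : ℕ) : Fin (max m n) → ZMod 2 :=
  C.f2 i s2 (fun j : Fin i => yt2 C t1 t2 y1 y2 j)

/-- The "hat" history determined by sources and target outputs. -/
def hatSig (i : ℕ) : Sig m n mt nt :=
  (xhat1 C s1 t1 t2 y1 y2 i, xhat2 C s2 t1 t2 y1 y2 i, xt1 C t1 y1 i, xt2 C t2 y2 i)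

lemma hist_eq_hat (i : ℕ)
    (hy : ∀ j < i, chOut m n (xhat1 C s1 t1 t2 y1 y2 j) (xhat2 C s2 t1 t2 y1 y2 j)
      = (y1 j, y2 j)) :
    hist C s1 s2 t1 t2 i = fun j : Fin i => hatSig C s1 s2 t1 t2 y1 y2 (j : ℕ) := by
  induction i with
  | zero => funext j; exact j.elim0
  | succ i ih =>
    have ih' := ih (fun j hj => hy j (Nat.lt_succ_of_lt hj))
    funext j
    induction j using Fin.lastCases with
    | last =>
      rw [hist, Fin.snoc_last]
      show step C s1 s2 t1 t2 i (hist C s1 s2 t1 t2 i) = hatSig C s1 s2 t1 t2 y1 y2 i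
      rw [ih']
      show (_, _, _, _) = (_, _, _, _)
      refine congrArg₂ _ ?_ (congrArg₂ _ ?_ (congrArg₂ _ ?_ ?_))
      · rfl
      · rfl
      · have harg : (fun j : Fin i =>
              (chOut m n (xhat1 C s1 t1 t2 y1 y2 j) (xhat2 C s2 t1 t2 y1 y2 j)).1)
            = fun j : Fin i => y1 j := by
          funext j; rw [hy j (Nat.lt_succ_of_lt j.isLt)]
        exact congrArg (C.ft1 i t1) harg
      · have harg : (fun j : Fin i =>
              (chOut m n (xhat1 C s1 t1 t2 y1 y2 j) (xhat2 C s2 t1 t2 y1 y2 j)).2)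
            = fun j : Fin i => y2 j := by
          funext j; rw [hy j (Nat.lt_succ_of_lt j.isLt)]
        exact congrArg (C.ft2 i t2) harg
    | cast j =>
      rw [hist, Fin.snoc_castSucc, ih']
      simp

lemma hist_apply : ∀ {i j : ℕ} (h : j < i),
    hist C s1 s2 t1 t2 i ⟨j, h⟩ = step C s1 s2 t1 t2 j (hist C s1 s2 t1 t2 j) := by
  intro i
  induction i with
  | zero => intro j h; omega
  | succ i ih =>
    intro j h
    rcases Nat.lt_or_ge j i with hj | hj
    · have : (⟨j, h⟩ : Fin (i + 1)) = Fin.castSucc ⟨j, hj⟩ := rfl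
      rw [hist, this, Fin.snoc_castSucc, ih hj]
    · have hji : j = i := by omega
      subst hji
      have : (⟨j, h⟩ : Fin (j + 1)) = Fin.last j := rfl
      rw [hist, this, Fin.snoc_last]

/-- The main characterization: the received forward sequences equal `y` iff the
reconstructed transmissions reproduce `y` through the channel. -/
lemma recv_char :
    ((∀ i : Fin C.N, recvF1 C s1 s2 t1 t2 i = y1 i ∧ recvF2 C s1 s2 t1 t2 i = y2 i)
      ↔ (∀ i < C.N, chOut m n (xhat1 C s1 t1 t2 y1 y2 i) (xhat2 C s2 t1 t2 y1 y2 i)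
          = (y1 i, y2 i))) := by
  have key : ∀ i (h : i < C.N),
      (∀ j < i, chOut m n (xhat1 C s1 t1 t2 y1 y2 j) (xhat2 C s2 t1 t2 y1 y2 j)
        = (y1 j, y2 j)) →
      ((recvF1 C s1 s2 t1 t2 ⟨i, h⟩, recvF2 C s1 s2 t1 t2 ⟨i, h⟩)
        = chOut m n (xhat1 C s1 t1 t2 y1 y2 i) (xhat2 C s2 t1 t2 y1 y2 i)) := by
    intro i h hy
    have hh := hist_eq_hat C s1 s2 t1 t2 y1 y2 i hy
    have h1 : hist C s1 s2 t1 t2 C.N ⟨i, h⟩ = step C s1 s2 t1 t2 i (hist C s1 s2 t1 t2 i) :=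
      hist_apply C s1 s2 t1 t2 h
    have h2 : (step C s1 s2 t1 t2 i (hist C s1 s2 t1 t2 i)).1 = xhat1 C s1 t1 t2 y1 y2 i := by
      rw [hh]; rfl
    have h3 : (step C s1 s2 t1 t2 i (hist C s1 s2 t1 t2 i)).2.1
        = xhat2 C s2 t1 t2 y1 y2 i := by
      rw [hh]; rfl
    have e1 : recvF1 C s1 s2 t1 t2 ⟨i, h⟩
        = (chOut m n (xhat1 C s1 t1 t2 y1 y2 i) (xhat2 C s2 t1 t2 y1 y2 i)).1 := by
      show (chOut m n (hist C s1 s2 t1 t2 C.N ⟨i, h⟩).1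
        (hist C s1 s2 t1 t2 C.N ⟨i, h⟩).2.1).1 = _
      rw [h1, h2, h3]
    have e2 : recvF2 C s1 s2 t1 t2 ⟨i, h⟩
        = (chOut m n (xhat1 C s1 t1 t2 y1 y2 i) (xhat2 C s2 t1 t2 y1 y2 i)).2 := by
      show (chOut m n (hist C s1 s2 t1 t2 C.N ⟨i, h⟩).1
        (hist C s1 s2 t1 t2 C.N ⟨i, h⟩).2.1).2 = _
      rw [h1, h2, h3]
    rw [e1, e2]
  constructor
  · intro hr i
    induction i using Nat.strong_induction_on with
    | _ i ih =>
      intro hi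
      have hk := key i hi (fun j hj => ih j hj (lt_trans hj hi))
      have := hr ⟨i, hi⟩
      rw [← hk, this.1, this.2]
  · intro he i
    have hk := key i i.isLt (fun j hj => he j (lt_trans hj i.isLt))
    have := he i i.isLt
    have : (recvF1 C s1 s2 t1 t2 ⟨(i : ℕ), i.isLt⟩, recvF2 C s1 s2 t1 t2 ⟨(i : ℕ), i.isLt⟩)
        = (y1 i, y2 i) := by rw [hk, this]
    constructor
    · have h1 := congrArg Prod.fst this
      simpa using h1
    · have h2 := congrArg Prod.snd this
      simpa using h2

end Fiber

end TwoWay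

namespace FinInfo
variable {Ω : Type*} [Fintype Ω]
open Finset Real

lemma pr_uniform (c : ℝ) {α : Type*} [DecidableEq α] (X : Ω → α) (a : α) :
    pr (fun _ => c) X a = (univ.filter fun ω => X ω = a).card * c := by
  classical
  rw [pr, ← Finset.sum_filter, Finset.sum_const, nsmul_eq_mul]

section Main
variable {α β γ : Type*} [Fintype α] [DecidableEq α] [Fintype β] [DecidableEq β]
  [Fintype γ] [DecidableEq γ] (X : Ω → α) (Y : Ω → β) (Z : Ω → γ)

theorem condMutualInfo_eq_zero_of_exchange
    (hexch : ∀ ω ω', Z ω = Z ω' → ∃ ω'', X ω'' = X ω ∧ Y ω'' = Y ω' ∧ Z ω'' = Z ω)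
    (hinj : ∀ ω ω', X ω = X ω' → Y ω = Y ω' → Z ω = Z ω' → ω = ω') :
    condMutualInfo (fun _ : Ω => (Fintype.card Ω : ℝ)⁻¹) X Y Z = 0 := by
  classical
  set M : ℝ := (Fintype.card Ω : ℝ)⁻¹ with hM
  set A : γ → Finset α := fun z => (univ.filter fun ω => Z ω = z).image X with hA
  set B : γ → Finset β := fun z => (univ.filter fun ω => Z ω = z).image Y with hB
  -- cardinality facts
  have cardZ : ∀ z, (univ.filter fun ω => Z ω = z).card = (A z).card * (B z).card := by
    intro z
    rw [← Finset.card_product]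
    apply Finset.card_bij (fun ω _ => (X ω, Y ω))
    · intro ω hω
      simp only [Finset.mem_filter, Finset.mem_univ, true_and] at hω
      simp only [Finset.mem_product, hA, hB, Finset.mem_image]
      exact ⟨⟨ω, by simp [hω], rfl⟩, ⟨ω, by simp [hω], rfl⟩⟩
    · intro ω hω ω' hω' hXY
      simp only [Finset.mem_filter, Finset.mem_univ, true_and] at hω hω'
      exact hinj ω ω' (congrArg Prod.fst hXY) (congrArg Prod.snd hXY) (hω.trans hω'.symm)
    · rintro ⟨x, y⟩ hxy
      simp only [Finset.mem_product, hA, hB, Finset.mem_image, Finset.mem_filter,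
        Finset.mem_univ, true_and] at hxy
      obtain ⟨⟨ω1, hz1, hx1⟩, ⟨ω2, hz2, hy2⟩⟩ := hxy
      obtain ⟨ω'', hX'', hY'', hZ''⟩ := hexch ω1 ω2 (hz1.trans hz2.symm)
      exact ⟨ω'', by simp [Finset.mem_filter, hZ''.trans hz1], by rw [hX'', hY'', hx1, hy2]⟩
  have cardXZ : ∀ (x : α) (z : γ), (univ.filter fun ω => X ω = x ∧ Z ω = z).card
      = if x ∈ A z then (B z).card else 0 := by
    intro x z
    by_cases hx : x ∈ A z
    · rw [if_pos hx]
      apply Finset.card_bij (fun ω _ => Y ω)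
      · intro ω hω
        simp only [Finset.mem_filter, Finset.mem_univ, true_and] at hω
        simp only [hB, Finset.mem_image]
        exact ⟨ω, by simp [hω.2], rfl⟩
      · intro ω hω ω' hω' hY
        simp only [Finset.mem_filter, Finset.mem_univ, true_and] at hω hω'
        exact hinj ω ω' (hω.1.trans hω'.1.symm) hY (hω.2.trans hω'.2.symm)
      · intro y hy
        simp only [hA, hB, Finset.mem_image, Finset.mem_filter, Finset.mem_univ,
          true_and] at hx hy
        obtain ⟨ω1, hz1, hx1⟩ := hx
        obtain ⟨ω2, hz2, hy2⟩ := hy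
        obtain ⟨ω'', hX'', hY'', hZ''⟩ := hexch ω1 ω2 (hz1.trans hz2.symm)
        exact ⟨ω'', by simp [Finset.mem_filter, hX''.trans hx1, hZ''.trans hz1], by
          rw [hY'', hy2]⟩
    · rw [if_neg hx, Finset.card_eq_zero, Finset.filter_eq_empty_iff]
      intro ω _
      rintro ⟨hX, hZ⟩
      exact hx (by simp only [hA, Finset.mem_image]; exact ⟨ω, by simp [hZ], hX⟩)
  have cardYZ : ∀ (y : β) (z : γ), (univ.filter fun ω => Y ω = y ∧ Z ω = z).card
      = if y ∈ B z then (A z).card else 0 := by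
    intro y z
    by_cases hy : y ∈ B z
    · rw [if_pos hy]
      apply Finset.card_bij (fun ω _ => X ω)
      · intro ω hω
        simp only [Finset.mem_filter, Finset.mem_univ, true_and] at hω
        simp only [hA, Finset.mem_image]
        exact ⟨ω, by simp [hω.2], rfl⟩
      · intro ω hω ω' hω' hX
        simp only [Finset.mem_filter, Finset.mem_univ, true_and] at hω hω'
        exact hinj ω ω' hX (hω.1.trans hω'.1.symm) (hω.2.trans hω'.2.symm)
      · intro x hx
        simp only [hA, hB, Finset.mem_image, Finset.mem_filter, Finset.mem_univ,
          true_and] at hx hy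
        obtain ⟨ω1, hz1, hx1⟩ := hx
        obtain ⟨ω2, hz2, hy2⟩ := hy
        obtain ⟨ω'', hX'', hY'', hZ''⟩ := hexch ω1 ω2 (hz1.trans hz2.symm)
        exact ⟨ω'', by simp [Finset.mem_filter, hY''.trans hy2, hZ''.trans hz1], by
          rw [hX'', hx1]⟩
    · rw [if_neg hy, Finset.card_eq_zero, Finset.filter_eq_empty_iff]
      intro ω _
      rintro ⟨hY, hZ⟩
      exact hy (by simp only [hB, Finset.mem_image]; exact ⟨ω, by simp [hZ], hY⟩)
  have cardXYZ : ∀ (x : α) (y : β) (z : γ),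
      (univ.filter fun ω => X ω = x ∧ Y ω = y ∧ Z ω = z).card
      = if x ∈ A z ∧ y ∈ B z then 1 else 0 := by
    intro x y z
    by_cases hxy : x ∈ A z ∧ y ∈ B z
    · rw [if_pos hxy, Finset.card_eq_one]
      obtain ⟨hx, hy⟩ := hxy
      simp only [hA, hB, Finset.mem_image, Finset.mem_filter, Finset.mem_univ,
        true_and] at hx hy
      obtain ⟨ω1, hz1, hx1⟩ := hx
      obtain ⟨ω2, hz2, hy2⟩ := hy
      obtain ⟨ω'', hX'', hY'', hZ''⟩ := hexch ω1 ω2 (hz1.trans hz2.symm)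
      refine ⟨ω'', Finset.eq_singleton_iff_unique_mem.2 ⟨by
        simp [Finset.mem_filter, hX''.trans hx1, hY''.trans hy2, hZ''.trans hz1], ?_⟩⟩
      intro ω hω
      simp only [Finset.mem_filter, Finset.mem_univ, true_and] at hω
      exact hinj ω ω'' (hω.1.trans (hX''.trans hx1).symm)
        (hω.2.1.trans (hY''.trans hy2).symm) (hω.2.2.trans (hZ''.trans hz1).symm)
    · rw [if_neg hxy, Finset.card_eq_zero, Finset.filter_eq_empty_iff]
      intro ω _
      rintro ⟨hX, hY, hZ⟩
      refine hxy ⟨?_, ?_⟩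
      · simp only [hA, Finset.mem_image]; exact ⟨ω, by simp [hZ], hX⟩
      · simp only [hB, Finset.mem_image]; exact ⟨ω, by simp [hZ], hY⟩
  -- entropies
  set a : γ → ℝ := fun z => ((A z).card : ℝ) with ha
  set b : γ → ℝ := fun z => ((B z).card : ℝ) with hb
  have eZ : entropy (fun _ : Ω => M) Z = ∑ z, negMulLog (a z * b z * M) := by
    unfold entropy
    refine Finset.sum_congr rfl fun z _ => ?_
    rw [pr_uniform, cardZ]
    push_cast
    ring_nf
    simp only [ha, hb]; ring_nf
  have eXZ : entropy (fun _ : Ω => M) (fun ω => (X ω, Z ω))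
      = ∑ z, a z * negMulLog (b z * M) := by
    unfold entropy
    rw [Fintype.sum_prod_type]
    rw [Finset.sum_comm]
    refine Finset.sum_congr rfl fun z _ => ?_
    have : ∀ x : α, negMulLog (pr (fun _ : Ω => M) (fun ω => (X ω, Z ω)) (x, z))
        = if x ∈ A z then negMulLog (b z * M) else 0 := by
      intro x
      rw [pr_uniform]
      have : (univ.filter fun ω => (X ω, Z ω) = (x, z))
          = univ.filter fun ω => X ω = x ∧ Z ω = z := by
        apply Finset.filter_congr; intro ω _; simp [Prod.ext_iff]
      rw [this, cardXZ]
      by_cases hx : x ∈ A z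
      · rw [if_pos hx, if_pos hx, hb]
      · rw [if_neg hx, if_neg hx]; simp
    simp only [this]
    rw [Finset.sum_ite_mem, Finset.univ_inter, Finset.sum_const, nsmul_eq_mul, ha]
  have eYZ : entropy (fun _ : Ω => M) (fun ω => (Y ω, Z ω))
      = ∑ z, b z * negMulLog (a z * M) := by
    unfold entropy
    rw [Fintype.sum_prod_type]
    rw [Finset.sum_comm]
    refine Finset.sum_congr rfl fun z _ => ?_
    have : ∀ y : β, negMulLog (pr (fun _ : Ω => M) (fun ω => (Y ω, Z ω)) (y, z))
        = if y ∈ B z then negMulLog (a z * M) else 0 := by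
      intro y
      rw [pr_uniform]
      have : (univ.filter fun ω => (Y ω, Z ω) = (y, z))
          = univ.filter fun ω => Y ω = y ∧ Z ω = z := by
        apply Finset.filter_congr; intro ω _; simp [Prod.ext_iff]
      rw [this, cardYZ]
      by_cases hy : y ∈ B z
      · rw [if_pos hy, if_pos hy, ha]
      · rw [if_neg hy, if_neg hy]; simp
    simp only [this]
    rw [Finset.sum_ite_mem, Finset.univ_inter, Finset.sum_const, nsmul_eq_mul, hb]
  have eXYZ : entropy (fun _ : Ω => M) (fun ω => (X ω, Y ω, Z ω))
      = ∑ z, a z * b z * negMulLog M := by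
    unfold entropy
    rw [Fintype.sum_prod_type]
    have : ∀ x : α, ∑ p : β × γ,
        negMulLog (pr (fun _ : Ω => M) (fun ω => (X ω, Y ω, Z ω)) (x, p))
        = ∑ z, ∑ y, (if x ∈ A z ∧ y ∈ B z then negMulLog M else 0) := by
      intro x
      rw [Fintype.sum_prod_type, Finset.sum_comm]
      refine Finset.sum_congr rfl fun z _ => Finset.sum_congr rfl fun y _ => ?_
      rw [pr_uniform]
      have : (univ.filter fun ω => (X ω, Y ω, Z ω) = (x, y, z))
          = univ.filter fun ω => X ω = x ∧ Y ω = y ∧ Z ω = z := by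
        apply Finset.filter_congr; intro ω _; simp [Prod.ext_iff]
      rw [this, cardXYZ]
      by_cases hxy : x ∈ A z ∧ y ∈ B z
      · rw [if_pos hxy, if_pos hxy]; norm_num
      · rw [if_neg hxy, if_neg hxy]; simp
    simp only [this]
    rw [Finset.sum_comm]
    refine Finset.sum_congr rfl fun z _ => ?_
    have hxsum : ∀ x : α, ∑ y, (if x ∈ A z ∧ y ∈ B z then negMulLog M else 0)
        = if x ∈ A z then b z * negMulLog M else 0 := by
      intro x
      by_cases hx : x ∈ A z
      · simp only [hx, true_and, if_pos]
        rw [Finset.sum_ite_mem, Finset.univ_inter, Finset.sum_const, nsmul_eq_mul, hb]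
      · simp [hx]
    simp only [hxsum]
    rw [Finset.sum_ite_mem, Finset.univ_inter, Finset.sum_const, nsmul_eq_mul, ha]
    ring
  unfold condMutualInfo
  rw [eXZ, eYZ, eXYZ, eZ, ← Finset.sum_add_distrib, ← Finset.sum_sub_distrib,
    ← Finset.sum_sub_distrib]
  refine Finset.sum_eq_zero fun z _ => ?_
  rw [Real.negMulLog_mul (b z) M, Real.negMulLog_mul (a z) M,
    Real.negMulLog_mul (a z * b z) M, Real.negMulLog_mul (a z) (b z)]
  ring


end Main
end FinInfo

open TwoWay FinInfo in
/-- Lemma 2: in the four-node ADT network with `m ≠ n`, under the uniform source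
distribution, the forward sources `S₁^K` and `S₂^K` are conditionally independent
given `(Y₁^N, Y₂^N, S̃₁^K̃, S̃₂^K̃)`:
`I(S₁^K ; S₂^K | Y₁^N, Y₂^N, S̃₁^K̃, S̃₂^K̃) = 0`. -/
theorem lemma2 (m n mt nt : ℕ) (hmn : m ≠ n) (C : Code m n mt nt) :
    condMutualInfo (fun _ : SrcSpace C => (Fintype.card (SrcSpace C) : ℝ)⁻¹)
      (fun ω => ω.1) (fun ω => ω.2.1)
      (fun ω => (recvF1 C ω.1 ω.2.1 ω.2.2.1 ω.2.2.2,
                 recvF2 C ω.1 ω.2.1 ω.2.2.1 ω.2.2.2,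
                 ω.2.2.1, ω.2.2.2)) = 0 := by
  classical
  apply condMutualInfo_eq_zero_of_exchange
  · rintro ⟨s1, s2, t1, t2⟩ ⟨s1', s2', t1', t2'⟩ hZ
    simp only [Prod.mk.injEq] at hZ
    obtain ⟨hr1, hr2, ht1, ht2⟩ := hZ
    subst ht1; subst ht2
    set y1 : ℕ → Fin (max m n) → ZMod 2 :=
      fun j => if h : j < C.N then recvF1 C s1 s2 t1 t2 ⟨j, h⟩ else 0 with hy1
    set y2 : ℕ → Fin (max m n) → ZMod 2 :=
      fun j => if h : j < C.N then recvF2 C s1 s2 t1 t2 ⟨j, h⟩ else 0 with hy2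
    have hw : ∀ i : Fin C.N,
        recvF1 C s1 s2 t1 t2 i = y1 i ∧ recvF2 C s1 s2 t1 t2 i = y2 i := by
      intro i
      constructor <;> · simp only [hy1, hy2, i.isLt, dif_pos]
    have hw' : ∀ i : Fin C.N,
        recvF1 C s1' s2' t1 t2 i = y1 i ∧ recvF2 C s1' s2' t1 t2 i = y2 i := by
      intro i
      exact ⟨by rw [← hr1]; exact (hw i).1, by rw [← hr2]; exact (hw i).2⟩
    have E := (recv_char C s1 s2 t1 t2 y1 y2).1 hw
    have E' := (recv_char C s1' s2' t1 t2 y1 y2).1 hw'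
    have hx2 : ∀ i < C.N, xhat2 C s2' t1 t2 y1 y2 i = xhat2 C s2 t1 t2 y1 y2 i := by
      intro i hi
      exact (chOut_inj hmn ((E' i hi).trans (E i hi).symm)).2
    have Emix : ∀ i < C.N, chOut m n (xhat1 C s1 t1 t2 y1 y2 i)
        (xhat2 C s2' t1 t2 y1 y2 i) = (y1 i, y2 i) := by
      intro i hi
      rw [hx2 i hi]
      exact E i hi
    have hwmix := (recv_char C s1 s2' t1 t2 y1 y2).2 Emix
    refine ⟨(s1, s2', t1, t2), rfl, rfl, ?_⟩
    simp only [Prod.mk.injEq]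
    refine ⟨?_, ?_, trivial⟩
    · funext i
      exact ((hwmix i).1).trans (hw i).1.symm
    · funext i
      exact ((hwmix i).2).trans (hw i).2.symm
  · rintro ⟨s1, s2, t1, t2⟩ ⟨s1', s2', t1', t2'⟩ hX hY hZ
    have h3 : t1 = t1' := congrArg (fun p => p.2.2.1) hZ
    have h4 : t2 = t2' := congrArg (fun p => p.2.2.2) hZ
    simp only [Prod.mk.injEq]
    exact ⟨hX, hY, h3, h4⟩
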